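/- Let r and n be positive integers and let O be any positive-dominant total order on C(r,n). The map Φ(f) = (γ_O(f), λ(f)) is a bijection from N_0^{r,n} onto G(r,n) × P_n, and for every f ∈ N_0^{r,n} it satisfies: (i) max(f) = max(λ(f)) + des_O(γ_O(f)); (ii) |f| = |λ(f)| + n·des_O(γ_O(f)) − maj_O(γ_O(f)), where |λ| = λ_1 + … + λ_n and max(λ) = λ_n. -/

import Mathlib

open scoped Classical

abbrev CI : Type := ℕ × ℕ

/-- Membership in the set `C(r,n)` of colored integers. -/
def memC (r n : ℕ) (x : CI) : Prop :=
  x.1 ≤ n ∧ x.2 < r ∧ (x.1 = 0 → x.2 = 0)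

/-- A positive-dominant (strict) total order on the colored integers `C(r,n)`. -/
structure PDOrder (r n : ℕ) where
  lt : CI → CI → Prop
  irrefl : ∀ x, memC r n x → ¬lt x x
  trans : ∀ x y z, memC r n x → memC r n y → memC r n z → lt x y → lt y z → lt x z
  trichotomy : ∀ x y, memC r n x → memC r n y → x = y ∨ lt x y ∨ lt y x
  nat_mono : ∀ i j : ℕ, i ≤ n → j ≤ n → i < j → lt (i, 0) (j, 0)
  pos_dom : ∀ i j c : ℕ, i ≤ n → 1 ≤ j → j ≤ n → 1 ≤ c → c < r → lt (j, c) (i, 0)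

/-- A colored permutation in `G(r,n) = Z_r ≀ S_n`. -/
structure ColoredPerm (r n : ℕ) where
  perm : Equiv.Perm (Fin n)
  color : Fin n → Fin r

/-- The colored entry `π(i)^{c_i}` (values are taken in `[1,n]`). -/
def cval {r n : ℕ} (γ : ColoredPerm r n) (i : Fin n) : CI :=
  ((γ.perm i : ℕ) + 1, (γ.color i : ℕ))

/-- Entry `γ(j)` for `j ∈ {0,…,n}`, with the convention `γ(0) = 0`. -/
def centry {r n : ℕ} (γ : ColoredPerm r n) (j : ℕ) : CI :=
  if h : 1 ≤ j ∧ j ≤ n then cval γ ⟨j - 1, by omega⟩ else (0, 0)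

/-- Descent set `Des(γ) ⊆ {0,…,n-1}` with respect to the relation `lt`. -/
noncomputable def DesSet {r n : ℕ} (lt : CI → CI → Prop) (γ : ColoredPerm r n) : Finset ℕ :=
  (Finset.range n).filter fun j => lt (centry γ (j + 1)) (centry γ j)

noncomputable def desStat {r n : ℕ} (lt : CI → CI → Prop) (γ : ColoredPerm r n) : ℕ :=
  (DesSet lt γ).card

noncomputable def majStat {r n : ℕ} (lt : CI → CI → Prop) (γ : ColoredPerm r n) : ℕ :=
  ∑ j ∈ DesSet lt γ, j

noncomputable def invStat {r n : ℕ} (lt : CI → CI → Prop) (γ : ColoredPerm r n) : ℕ :=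
  ((Finset.univ : Finset (Fin n × Fin n)).filter fun p =>
    p.1 < p.2 ∧ lt (cval γ p.2) (cval γ p.1)).card

noncomputable def lenStat {r n : ℕ} (lt : CI → CI → Prop) (γ : ColoredPerm r n) : ℕ :=
  invStat lt γ +
    ∑ i ∈ Finset.univ.filter (fun i => 0 < (γ.color i : ℕ)),
      ((γ.perm i : ℕ) + 1 + (γ.color i : ℕ) - 1)

def colStat {r n : ℕ} (γ : ColoredPerm r n) : ℕ := ∑ i, (γ.color i : ℕ)

/-- The inverse colored permutation `γ⁻¹`. -/
def cinv {r n : ℕ} (γ : ColoredPerm r n) : ColoredPerm r n :=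
  ⟨γ.perm⁻¹, fun i => γ.color (γ.perm⁻¹ i)⟩

/-- An element of `N_0^{r,n}`: a sequence of colored nonnegative integers. -/
structure ColoredSeq (r n : ℕ) where
  val : Fin n → ℕ
  col : Fin n → ℕ
  col_lt : ∀ i, col i < r
  zero_col : ∀ i, val i = 0 → col i = 0

/-- `γ` is the colored permutation `γ_O(f)` obtained by sorting the colored positions
`i^{cf_i}` by increasing value `f_i`, ties broken by increasing `lt`-order. -/
def isSorted {r n : ℕ} (lt : CI → CI → Prop) (f : ColoredSeq r n) (γ : ColoredPerm r n) : Prop :=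
  (∀ i, (γ.color i : ℕ) = f.col (γ.perm i)) ∧
    ∀ i j : Fin n, i < j →
      f.val (γ.perm i) < f.val (γ.perm j) ∨
        (f.val (γ.perm i) = f.val (γ.perm j) ∧ lt (cval γ i) (cval γ j))

def maxf {r n : ℕ} (f : ColoredSeq r n) : ℕ := Finset.univ.sup f.val
def sumf {r n : ℕ} (f : ColoredSeq r n) : ℕ := ∑ i, f.val i
def colf {r n : ℕ} (f : ColoredSeq r n) : ℕ := ∑ i, f.col i

section Aux
variable {r n : ℕ}

lemma memC_cval (γ : ColoredPerm r n) (i : Fin n) : memC r n (cval γ i) :=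
  ⟨Nat.succ_le_of_lt (γ.perm i).isLt, (γ.color i).isLt, by simp [cval]⟩

lemma memC_zero (hr : 0 < r) : memC r n ((0, 0) : CI) := ⟨Nat.zero_le _, hr, fun _ => rfl⟩

lemma PDOrder.asymm (O : PDOrder r n) {x y : CI} (hx : memC r n x) (hy : memC r n y)
    (h : O.lt x y) (h' : O.lt y x) : False :=
  O.irrefl x hx (O.trans x y x hx hy hx h h')

lemma cval_inj (γ : ColoredPerm r n) {i j : Fin n} (h : cval γ i = cval γ j) : i = j := by
  have := congrArg Prod.fst h
  simp only [cval] at this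
  exact γ.perm.injective (Fin.ext (by omega))

lemma cval_ne_zero (γ : ColoredPerm r n) (i : Fin n) : cval γ i ≠ ((0,0) : CI) := by
  intro h
  have := congrArg Prod.fst h
  simp [cval] at this

lemma lt_cval_of_not (O : PDOrder r n) (γ : ColoredPerm r n) {i j : Fin n} (hij : i ≠ j)
    (h : ¬ O.lt (cval γ j) (cval γ i)) : O.lt (cval γ i) (cval γ j) := by
  rcases O.trichotomy _ _ (memC_cval γ i) (memC_cval γ j) with h1 | h1 | h1
  · exact absurd (cval_inj γ h1) hij
  · exact h1
  · exact absurd h1 h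

lemma centry_zero (γ : ColoredPerm r n) : centry γ 0 = ((0,0) : CI) := by
  simp [centry]

lemma centry_succ (γ : ColoredPerm r n) (j : ℕ) (hj : j < n) :
    centry γ (j + 1) = cval γ ⟨j, hj⟩ := by
  rw [centry, dif_pos ⟨by omega, by omega⟩]
  rfl

lemma mem_DesSet {lt : CI → CI → Prop} {γ : ColoredPerm r n} {j : ℕ} :
    j ∈ DesSet lt γ ↔ j < n ∧ lt (centry γ (j + 1)) (centry γ j) := by
  simp [DesSet]

noncomputable def Dcnt {r n : ℕ} (lt : CI → CI → Prop) (γ : ColoredPerm r n) (i : ℕ) : ℕ :=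
  ((DesSet lt γ).filter fun j => j ≤ i).card

lemma Dcnt_zero {lt : CI → CI → Prop} (γ : ColoredPerm r n) :
    Dcnt lt γ 0 = if 0 ∈ DesSet lt γ then 1 else 0 := by
  unfold Dcnt
  have h : ((DesSet lt γ).filter fun j => j ≤ 0) = (DesSet lt γ).filter fun j => j = 0 := by
    apply Finset.filter_congr; intro x _; omega
  rw [h, Finset.filter_eq']
  split <;> simp

lemma Dcnt_succ {lt : CI → CI → Prop} (γ : ColoredPerm r n) (i : ℕ) :
    Dcnt lt γ (i + 1) = Dcnt lt γ i + if (i + 1) ∈ DesSet lt γ then 1 else 0 := by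
  unfold Dcnt
  have h : ((DesSet lt γ).filter fun j => j ≤ i + 1)
      = ((DesSet lt γ).filter fun j => j ≤ i) ∪ ((DesSet lt γ).filter fun j => j = i + 1) := by
    rw [← Finset.filter_or]
    apply Finset.filter_congr; intro x _; omega
  rw [h, Finset.card_union_of_disjoint, Finset.filter_eq']
  · split <;> simp
  · rw [Finset.disjoint_left]; intro a ha ha'
    simp only [Finset.mem_filter] at ha ha'
    omega

lemma Dcnt_mono {lt : CI → CI → Prop} (γ : ColoredPerm r n) {i j : ℕ} (h : i ≤ j) :
    Dcnt lt γ i ≤ Dcnt lt γ j := by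
  apply Finset.card_le_card
  intro x hx
  rw [Finset.mem_filter] at hx ⊢
  exact ⟨hx.1, hx.2.trans h⟩

lemma Dcnt_lt_of_descent {lt : CI → CI → Prop} (γ : ColoredPerm r n) {k i j : ℕ}
    (hk : k ∈ DesSet lt γ) (h1 : i < k) (h2 : k ≤ j) : Dcnt lt γ i < Dcnt lt γ j := by
  apply Finset.card_lt_card
  constructor
  · intro x hx
    rw [Finset.mem_filter] at hx ⊢
    exact ⟨hx.1, by omega⟩
  · intro hsub
    have hkj : k ∈ (DesSet lt γ).filter fun j' => j' ≤ j := Finset.mem_filter.2 ⟨hk, h2⟩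
    have := hsub hkj
    simp only [Finset.mem_filter] at this
    omega

lemma Dcnt_eq_des {lt : CI → CI → Prop} (γ : ColoredPerm r n) {m : ℕ} (hm : n - 1 ≤ m) :
    Dcnt lt γ m = desStat lt γ := by
  unfold Dcnt desStat
  congr 1
  apply Finset.filter_true_of_mem
  intro x hx
  have := mem_DesSet.1 hx
  omega

lemma step_lt (O : PDOrder r n) (γ : ColoredPerm r n) (i : ℕ) (h : i + 1 < n)
    (hnd : (i + 1) ∉ DesSet O.lt γ) :
    O.lt (cval γ ⟨i, by omega⟩) (cval γ ⟨i + 1, h⟩) := by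
  rw [mem_DesSet, centry_succ γ (i+1) h, centry_succ γ i (by omega)] at hnd
  push_neg at hnd
  exact lt_cval_of_not O γ (by simp [Fin.ext_iff]) (hnd h)

lemma chain_lt (O : PDOrder r n) (γ : ColoredPerm r n) :
    ∀ d (i : ℕ) (h : i + d < n), 0 < d →
      (∀ k, i < k → k ≤ i + d → k ∉ DesSet O.lt γ) →
      O.lt (cval γ ⟨i, by omega⟩) (cval γ ⟨i + d, h⟩) := by
  intro d
  induction d with
  | zero => omega
  | succ d ih =>
    intro i h _ hk
    rcases Nat.eq_zero_or_pos d with hd | hd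
    · subst hd
      exact step_lt O γ i h (hk (i+1) (by omega) (by omega))
    · have h1 : i + d < n := by omega
      have hstep : O.lt (cval γ ⟨i + d, h1⟩) (cval γ ⟨i + d + 1, by omega⟩) :=
        step_lt O γ (i + d) (by omega) (hk (i+d+1) (by omega) (by omega))
      exact O.trans _ _ _ (memC_cval γ _) (memC_cval γ _) (memC_cval γ _)
        (ih i h1 hd (fun k a b => hk k a (by omega))) hstep

lemma zero_chain (O : PDOrder r n) (hr : 0 < r) (γ : ColoredPerm r n) (p : Fin n)
    (h : ∀ k, k ≤ (p : ℕ) → k ∉ DesSet O.lt γ) :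
    O.lt ((0,0) : CI) (cval γ p) := by
  have hn0 : 0 < n := lt_of_le_of_lt (Nat.zero_le _) p.isLt
  have h0 : O.lt ((0,0) : CI) (cval γ ⟨0, by omega⟩) := by
    have := h 0 (by omega)
    rw [mem_DesSet, centry_succ γ 0 (by omega), centry_zero] at this
    push_neg at this
    rcases O.trichotomy _ _ (memC_zero hr) (memC_cval γ ⟨0, by omega⟩) with h1 | h1 | h1
    · exact absurd h1.symm (cval_ne_zero γ _)
    · exact h1
    · exact absurd h1 (this hn0)
  rcases Nat.eq_zero_or_pos (p : ℕ) with hp | hp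
  · have : p = ⟨0, by omega⟩ := Fin.ext hp
    rwa [this]
  · have hc : O.lt (cval γ ⟨0, by omega⟩) (cval γ ⟨0 + (p : ℕ), by omega⟩) :=
      chain_lt O γ (p : ℕ) 0 (by omega) hp (fun k a b => h k (by omega))
    have hpe : (⟨0 + (p : ℕ), by omega⟩ : Fin n) = p := Fin.ext (by simp)
    rw [hpe] at hc
    exact O.trans _ _ _ (memC_zero hr) (memC_cval γ _) (memC_cval γ _) h0 hc

lemma descent_of_pos_color (O : PDOrder r n) (hr : 0 < r) (γ : ColoredPerm r n) (p : Fin n)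
    (hc : 0 < (γ.color p : ℕ)) : ∃ k ≤ (p : ℕ), k ∈ DesSet O.lt γ := by
  by_contra hcon
  push_neg at hcon
  have h1 := zero_chain O hr γ p (fun k hk => hcon k hk)
  have h2 : O.lt (cval γ p) ((0,0) : CI) :=
    O.pos_dom 0 ((γ.perm p : ℕ) + 1) (γ.color p : ℕ) (Nat.zero_le _)
      (by omega) (Nat.succ_le_of_lt (γ.perm p).isLt) hc (γ.color p).isLt
  exact O.asymm (memC_zero hr) (memC_cval γ p) h1 h2

end Aux

section Aux2
variable {r n : ℕ}

def keyf {r n : ℕ} (f : ColoredSeq r n) (a : Fin n) : CI := ((a : ℕ) + 1, f.col a)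

lemma memC_keyf (f : ColoredSeq r n) (a : Fin n) : memC r n (keyf f a) :=
  ⟨Nat.succ_le_of_lt a.isLt, f.col_lt a, by simp [keyf]⟩

lemma keyf_inj (f : ColoredSeq r n) {a b : Fin n} (h : keyf f a = keyf f b) : a = b := by
  have := congrArg Prod.fst h
  simp only [keyf] at this
  exact Fin.ext (by omega)

def precf {r n : ℕ} (O : PDOrder r n) (f : ColoredSeq r n) (a b : Fin n) : Prop :=
  f.val a < f.val b ∨ (f.val a = f.val b ∧ O.lt (keyf f a) (keyf f b))

lemma precf_asymm (O : PDOrder r n) (f : ColoredSeq r n) {a b : Fin n}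
    (h : precf O f a b) (h' : precf O f b a) : False := by
  rcases h with h | ⟨h1, h2⟩ <;> rcases h' with h' | ⟨h1', h2'⟩
  · omega
  · omega
  · omega
  · exact O.asymm (memC_keyf f a) (memC_keyf f b) h2 h2'

lemma precf_trans (O : PDOrder r n) (f : ColoredSeq r n) {a b c : Fin n}
    (h : precf O f a b) (h' : precf O f b c) : precf O f a c := by
  rcases h with h | ⟨h1, h2⟩ <;> rcases h' with h' | ⟨h1', h2'⟩
  · exact Or.inl (h.trans h')
  · exact Or.inl (by omega)
  · exact Or.inl (by omega)
  · exact Or.inr ⟨h1.trans h1',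
      O.trans _ _ _ (memC_keyf f a) (memC_keyf f b) (memC_keyf f c) h2 h2'⟩

lemma precf_total (O : PDOrder r n) (f : ColoredSeq r n) {a b : Fin n} (hab : a ≠ b) :
    precf O f a b ∨ precf O f b a := by
  rcases lt_trichotomy (f.val a) (f.val b) with h | h | h
  · exact Or.inl (Or.inl h)
  · rcases O.trichotomy _ _ (memC_keyf f a) (memC_keyf f b) with h1 | h1 | h1
    · exact absurd (keyf_inj f h1) hab
    · exact Or.inl (Or.inr ⟨h, h1⟩)
    · exact Or.inr (Or.inr ⟨h.symm, h1⟩)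
  · exact Or.inr (Or.inl h)

lemma cval_eq_keyf {O : PDOrder r n} {f : ColoredSeq r n} {γ : ColoredPerm r n}
    (hs : isSorted O.lt f γ) (i : Fin n) : cval γ i = keyf f (γ.perm i) := by
  unfold cval keyf
  rw [hs.1 i]

lemma sorted_precf {O : PDOrder r n} {f : ColoredSeq r n} {γ : ColoredPerm r n}
    (hs : isSorted O.lt f γ) {i j : Fin n} (hij : i < j) :
    precf O f (γ.perm i) (γ.perm j) := by
  rcases hs.2 i j hij with h | ⟨h1, h2⟩
  · exact Or.inl h
  · exact Or.inr ⟨h1, by rwa [cval_eq_keyf hs i, cval_eq_keyf hs j] at h2⟩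

/-- Uniqueness of the sorted colored permutation. -/
lemma sorted_unique {O : PDOrder r n} {f : ColoredSeq r n} {γ γ' : ColoredPerm r n}
    (hs : isSorted O.lt f γ) (hs' : isSorted O.lt f γ') : γ = γ' := by
  have hperm : γ.perm = γ'.perm := by
    set g : Equiv.Perm (Fin n) := γ.perm.trans γ'.perm.symm with hg
    have hga : ∀ i, γ'.perm (g i) = γ.perm i := by
      intro i; simp [hg]
    have hmono : StrictMono ⇑g := by
      intro i j hij
      rcases lt_trichotomy (g i) (g j) with h | h | h
      · exact h
      · exact absurd (γ.perm.injective (by rw [← hga i, ← hga j, h])) (ne_of_lt hij)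
      · exfalso
        have h1 := sorted_precf hs hij
        have h2 := sorted_precf hs' h
        rw [hga i, hga j] at h2
        exact precf_asymm O f h1 h2
    have hid : ⇑g = id := by
      haveI : WellFoundedLT (Fin n) := inferInstance
      have h := StrictMono.range_inj hmono (strictMono_id : StrictMono (id : Fin n → Fin n))
      exact h.1 (by rw [Equiv.range_eq_univ, Set.range_id])
    ext x
    have : g x = x := congrFun hid x
    rw [← hga x, this]
  have hcol : γ.color = γ'.color := by
    funext i
    apply Fin.ext
    rw [hs.1 i, hs'.1 i, hperm]
  cases γ; cases γ'
  simp_all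

/-- Existence of the sorted colored permutation. -/
lemma sorted_exists (O : PDOrder r n) (f : ColoredSeq r n) :
    ∃ γ : ColoredPerm r n, isSorted O.lt f γ := by
  classical
  set R : Fin n → Fin n → Prop := fun a b => a = b ∨ precf O f a b with hR
  haveI hTrans : IsTrans (Fin n) R := ⟨by
    rintro a b c (rfl | hab) (rfl | hbc)
    · exact Or.inl rfl
    · exact Or.inr hbc
    · exact Or.inr hab
    · exact Or.inr (precf_trans O f hab hbc)⟩
  haveI hAnti : IsAntisymm (Fin n) R := ⟨by
    rintro a b (rfl | hab) (h | hba)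
    · rfl
    · rfl
    · exact h.symm
    · exact absurd hba (fun h => precf_asymm O f hab h)⟩
  haveI hTotal : IsTotal (Fin n) R := ⟨by
    intro a b
    rcases eq_or_ne a b with rfl | hab
    · exact Or.inl (Or.inl rfl)
    · rcases precf_total O f hab with h | h
      · exact Or.inl (Or.inr h)
      · exact Or.inr (Or.inr h)⟩
  let l := Finset.sort Finset.univ R
  have hlen : l.length = n := by
    simp [l, Finset.length_sort]
  let π₀ : Fin n → Fin n := fun i => l.get (Fin.cast hlen.symm i)
  have hinj : Function.Injective π₀ := by
    intro a b hab
    have := (List.nodup_iff_injective_get).1 (Finset.sort_nodup Finset.univ R) hab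
    exact Fin.ext (by simpa using congrArg Fin.val this)
  have hbij : Function.Bijective π₀ := (Finite.injective_iff_bijective).1 hinj
  let e := Equiv.ofBijective π₀ hbij
  refine ⟨⟨e, fun i => ⟨f.col (π₀ i), f.col_lt _⟩⟩, fun i => rfl, ?_⟩
  intro i j hij
  have hsorted : List.Pairwise R l := Finset.pairwise_sort Finset.univ R
  have hrel : R (π₀ i) (π₀ j) := hsorted.rel_get_of_lt
    (by simp only [Fin.lt_def, Fin.coe_cast]; exact hij)
  have hne : π₀ i ≠ π₀ j := fun h => (ne_of_lt hij) (hinj h)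
  rcases hrel with h | h
  · exact absurd h hne
  · rcases h with h | ⟨h1, h2⟩
    · exact Or.inl h
    · exact Or.inr ⟨h1, h2⟩

end Aux2

section Aux3
variable {r n : ℕ}

lemma sorted_le {O : PDOrder r n} {f : ColoredSeq r n} {γ : ColoredPerm r n}
    (hs : isSorted O.lt f γ) {i j : Fin n} (hij : i ≤ j) :
    f.val (γ.perm i) ≤ f.val (γ.perm j) := by
  rcases eq_or_lt_of_le hij with rfl | h
  · exact le_refl _
  · rcases hs.2 i j h with h' | ⟨h1, _⟩
    · exact le_of_lt h'
    · exact le_of_eq h1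

lemma sorted_pos0 {O : PDOrder r n} {f : ColoredSeq r n} {γ : ColoredPerm r n}
    (hs : isSorted O.lt f γ) (hn : 0 < n) (h0 : 0 ∈ DesSet O.lt γ) :
    1 ≤ f.val (γ.perm ⟨0, hn⟩) := by
  have hlt := (mem_DesSet.1 h0).2
  rw [centry_succ γ 0 hn, centry_zero] at hlt
  by_contra hcon
  have hv : f.val (γ.perm ⟨0, hn⟩) = 0 := by omega
  have hcol : (γ.color ⟨0, hn⟩ : ℕ) = 0 := by
    rw [hs.1 ⟨0, hn⟩]; exact f.zero_col _ hv
  have hr : 0 < r := (γ.color ⟨0, hn⟩).pos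
  have hnm : O.lt ((0,0) : CI) (cval γ ⟨0, hn⟩) := by
    have := O.nat_mono 0 ((γ.perm ⟨0, hn⟩ : ℕ) + 1) (Nat.zero_le _)
      (Nat.succ_le_of_lt (γ.perm ⟨0, hn⟩).isLt) (by omega)
    unfold cval
    rwa [hcol]
  exact O.asymm (memC_zero hr) (memC_cval γ _) hnm hlt

lemma sorted_strict {O : PDOrder r n} {f : ColoredSeq r n} {γ : ColoredPerm r n}
    (hs : isSorted O.lt f γ) (m : ℕ) (hm1 : m < n) (hm2 : m + 1 < n)
    (hdes : (m + 1) ∈ DesSet O.lt γ) :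
    f.val (γ.perm ⟨m, hm1⟩) < f.val (γ.perm ⟨m + 1, hm2⟩) := by
  have hlt := (mem_DesSet.1 hdes).2
  rw [centry_succ γ (m+1) hm2, centry_succ γ m hm1] at hlt
  rcases hs.2 ⟨m, hm1⟩ ⟨m+1, hm2⟩ (by simp [Fin.lt_def]) with h | ⟨_, h2⟩
  · exact h
  · exact absurd h2 (fun h2 => O.asymm (memC_cval γ _) (memC_cval γ _) h2 hlt)

lemma key_ineq {O : PDOrder r n} {f : ColoredSeq r n} {γ : ColoredPerm r n}
    (hs : isSorted O.lt f γ) :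
    ∀ m : ℕ, ∀ hm : m < n, ∀ i : Fin n, (i : ℕ) ≤ m →
      Dcnt O.lt γ m + f.val (γ.perm i) ≤ Dcnt O.lt γ (i : ℕ) + f.val (γ.perm ⟨m, hm⟩) := by
  intro m
  induction m with
  | zero =>
    intro hm i hi
    have hie : i = ⟨0, hm⟩ := Fin.ext (show (i : ℕ) = 0 by omega)
    subst hie
    exact le_refl _
  | succ m ih =>
    intro hm i hi
    have hmn : m < n := by omega
    rcases Nat.lt_or_ge (i : ℕ) (m + 1) with hlt | hge
    · have IH := ih hmn i (by omega)
      rw [Dcnt_succ]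
      by_cases hdes : (m + 1) ∈ DesSet O.lt γ
      · have hstrict := sorted_strict hs m hmn hm hdes
        rw [if_pos hdes]; omega
      · have hle := sorted_le hs (i := ⟨m, hmn⟩) (j := ⟨m+1, hm⟩) (by simp [Fin.le_def])
        rw [if_neg hdes]; omega
    · have hie : i = ⟨m + 1, hm⟩ := Fin.ext (show (i : ℕ) = m + 1 by omega)
      subst hie
      exact le_refl _

lemma Dcnt_le_val {O : PDOrder r n} {f : ColoredSeq r n} {γ : ColoredPerm r n}
    (hs : isSorted O.lt f γ) (i : Fin n) :
    Dcnt O.lt γ (i : ℕ) ≤ f.val (γ.perm i) := by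
  have hn : 0 < n := i.pos
  have H := key_ineq hs (i : ℕ) i.isLt ⟨0, hn⟩ (Nat.zero_le _)
  simp only [Fin.eta] at H
  have h0 : Dcnt O.lt γ 0 ≤ f.val (γ.perm ⟨0, hn⟩) := by
    rw [Dcnt_zero]
    split
    · exact sorted_pos0 hs hn (by assumption)
    · exact Nat.zero_le _
  omega

end Aux3

section Aux4
variable {r n : ℕ}

noncomputable def psiSeq (O : PDOrder r n) (γ : ColoredPerm r n) (g : Fin n → ℕ) :
    ColoredSeq r n where
  val k := g (γ.perm⁻¹ k) + Dcnt O.lt γ ((γ.perm⁻¹ k : Fin n) : ℕ)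
  col k := (γ.color (γ.perm⁻¹ k) : ℕ)
  col_lt k := (γ.color (γ.perm⁻¹ k)).isLt
  zero_col k h := by
    replace h : g (γ.perm⁻¹ k) + Dcnt O.lt γ ((γ.perm⁻¹ k : Fin n) : ℕ) = 0 := h
    show (γ.color (γ.perm⁻¹ k) : ℕ) = 0
    by_contra hc
    have hc' : 0 < (γ.color (γ.perm⁻¹ k) : ℕ) := Nat.pos_of_ne_zero hc
    have hr : 0 < r := (γ.color (γ.perm⁻¹ k)).pos
    obtain ⟨k', hk1, hk2⟩ := descent_of_pos_color O hr γ (γ.perm⁻¹ k) hc'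
    have hmem : k' ∈ (DesSet O.lt γ).filter fun j => j ≤ ((γ.perm⁻¹ k : Fin n) : ℕ) :=
      Finset.mem_filter.2 ⟨hk2, hk1⟩
    have hpos := Finset.card_pos.2 ⟨k', hmem⟩
    have hD : Dcnt O.lt γ ((γ.perm⁻¹ k : Fin n) : ℕ) = 0 := by omega
    unfold Dcnt at hD
    omega

lemma psi_val_perm (O : PDOrder r n) (γ : ColoredPerm r n) (g : Fin n → ℕ) (i : Fin n) :
    (psiSeq O γ g).val (γ.perm i) = g i + Dcnt O.lt γ (i : ℕ) := by
  simp [psiSeq, Equiv.Perm.inv_def, Equiv.symm_apply_apply]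

lemma psi_sorted (O : PDOrder r n) (γ : ColoredPerm r n) (g : Fin n → ℕ) (hg : Monotone g) :
    isSorted O.lt (psiSeq O γ g) γ := by
  constructor
  · intro i
    simp [psiSeq, Equiv.Perm.inv_def, Equiv.symm_apply_apply]
  · intro i j hij
    rw [psi_val_perm, psi_val_perm]
    have hgle : g i ≤ g j := hg (le_of_lt hij)
    have hDle : Dcnt O.lt γ (i : ℕ) ≤ Dcnt O.lt γ (j : ℕ) := Dcnt_mono γ (by
      exact Nat.le_of_lt hij)
    rcases Nat.lt_or_ge (g i + Dcnt O.lt γ (i : ℕ)) (g j + Dcnt O.lt γ (j : ℕ)) with h | h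
    · exact Or.inl h
    · right
      have heq : g i + Dcnt O.lt γ (i : ℕ) = g j + Dcnt O.lt γ (j : ℕ) := by omega
      refine ⟨heq, ?_⟩
      have hDeq : Dcnt O.lt γ (i : ℕ) = Dcnt O.lt γ (j : ℕ) := by omega
      have hnodesc : ∀ k, (i : ℕ) < k → k ≤ (j : ℕ) → k ∉ DesSet O.lt γ := by
        intro k h1 h2 hk
        have := Dcnt_lt_of_descent γ hk h1 h2
        omega
      have hd : (i : ℕ) + ((j : ℕ) - (i : ℕ)) < n := by omega
      have hchain := chain_lt O γ ((j : ℕ) - (i : ℕ)) (i : ℕ) hd (by omega)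
        (fun k a b => hnodesc k a (by omega))
      have e1 : (⟨(i : ℕ), by omega⟩ : Fin n) = i := Fin.eta i _
      have e2 : (⟨(i : ℕ) + ((j : ℕ) - (i : ℕ)), hd⟩ : Fin n) = j := Fin.ext (by simp; omega)
      rwa [e1, e2] at hchain

end Aux4

section Main
variable {r n : ℕ}

lemma ColoredSeq.ext' {f g : ColoredSeq r n} (h1 : f.val = g.val) (h2 : f.col = g.col) :
    f = g := by
  cases f; cases g; cases h1; cases h2; rfl

noncomputable def PsiFun (O : PDOrder r n)
    (x : ColoredPerm r n × { g : Fin n → ℕ // Monotone g }) : ColoredSeq r n :=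
  psiSeq O x.1 x.2.1

lemma PsiFun_injective (O : PDOrder r n) : Function.Injective (PsiFun O) := by
  rintro ⟨γ, g, hg⟩ ⟨γ', g', hg'⟩ h
  replace h : psiSeq O γ g = psiSeq O γ' g' := h
  have hs1 := psi_sorted O γ g hg
  have hs2 := psi_sorted O γ' g' hg'
  rw [← h] at hs2
  have h1 : γ = γ' := sorted_unique hs1 hs2
  subst h1
  have hgg : ∀ i, g i = g' i := by
    intro i
    have e1 := psi_val_perm O γ g i
    have e2 := psi_val_perm O γ g' i
    rw [h] at e1
    omega
  simp only [Prod.mk.injEq]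
  exact ⟨trivial, Subtype.ext (funext hgg)⟩

lemma PsiFun_surjective (O : PDOrder r n) : Function.Surjective (PsiFun O) := by
  intro f
  obtain ⟨γ, hs⟩ := sorted_exists O f
  have hDle := Dcnt_le_val hs
  refine ⟨⟨γ, ⟨fun i => f.val (γ.perm i) - Dcnt O.lt γ (i : ℕ), ?_⟩⟩, ?_⟩
  · intro i j hij
    have H := key_ineq hs (j : ℕ) j.isLt i hij
    simp only [Fin.eta] at H
    have h1 := hDle i
    have h2 := hDle j
    simp only
    omega
  · apply ColoredSeq.ext'
    · funext k
      show (fun i => f.val (γ.perm i) - Dcnt O.lt γ (i : ℕ)) (γ.perm⁻¹ k)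
        + Dcnt O.lt γ ((γ.perm⁻¹ k : Fin n) : ℕ) = f.val k
      simp only
      rw [Nat.sub_add_cancel (hDle (γ.perm⁻¹ k)), Equiv.Perm.inv_def, Equiv.apply_symm_apply]
    · funext k
      show (γ.color (γ.perm⁻¹ k) : ℕ) = f.col k
      rw [hs.1 (γ.perm⁻¹ k), Equiv.Perm.inv_def, Equiv.apply_symm_apply]

end Main

-- Statement 1
theorem stmt1 (r n : ℕ) (hr : 0 < r) (hn : 0 < n) (O : PDOrder r n) :
    ∃ Φ : ColoredSeq r n → ColoredPerm r n × { g : Fin n → ℕ // Monotone g },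
      Function.Bijective Φ ∧
      ∀ f : ColoredSeq r n,
        isSorted O.lt f (Φ f).1 ∧
        (∀ i : Fin n, ((Φ f).2.1 i : ℤ) =
          (f.val ((Φ f).1.perm i) : ℤ) -
            ((DesSet O.lt (Φ f).1).filter fun j => j ≤ (i : ℕ)).card) ∧
        maxf f = (Φ f).2.1 ⟨n - 1, by omega⟩ + desStat O.lt (Φ f).1 ∧
        (sumf f : ℤ) = (∑ i, ((Φ f).2.1 i : ℤ)) + n * desStat O.lt (Φ f).1
          - majStat O.lt (Φ f).1 := by
  classical
  have hbij : Function.Bijective (PsiFun O) := ⟨PsiFun_injective O, PsiFun_surjective O⟩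
  let E := Equiv.ofBijective (PsiFun O) hbij
  refine ⟨fun f => E.symm f, E.symm.bijective, ?_⟩
  intro f
  set x := E.symm f with hxdef
  have hfx : PsiFun O x = f := E.apply_symm_apply f
  have hfx' : psiSeq O x.1 x.2.1 = f := hfx
  have hsor : isSorted O.lt f x.1 := by
    rw [← hfx']
    exact psi_sorted O x.1 x.2.1 x.2.2
  have heval : ∀ i : Fin n, f.val (x.1.perm i) = x.2.1 i + Dcnt O.lt x.1 (i : ℕ) := by
    intro i
    have e := psi_val_perm O x.1 x.2.1 i
    rwa [hfx'] at e
  refine ⟨hsor, ?_, ?_, ?_⟩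
  · intro i
    show (x.2.1 i : ℤ) = (f.val (x.1.perm i) : ℤ) - (Dcnt O.lt x.1 (i : ℕ) : ℤ)
    rw [heval i]
    push_cast
    ring
  · -- max statement
    have hlast : ∀ k, f.val k ≤ f.val (x.1.perm ⟨n - 1, by omega⟩) := by
      intro k
      have hkl := (x.1.perm⁻¹ k).isLt
      have hle : x.1.perm⁻¹ k ≤ (⟨n - 1, by omega⟩ : Fin n) :=
        (show ((x.1.perm⁻¹ k : Fin n) : ℕ) ≤ n - 1 by omega)
      have := sorted_le hsor hle
      rwa [Equiv.Perm.inv_def, Equiv.apply_symm_apply] at this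
    have hmax : maxf f = f.val (x.1.perm ⟨n - 1, by omega⟩) :=
      le_antisymm (Finset.sup_le fun k _ => hlast k) (Finset.le_sup (Finset.mem_univ _))
    rw [hmax, heval ⟨n - 1, by omega⟩,
      show Dcnt O.lt x.1 (((⟨n - 1, by omega⟩ : Fin n)) : ℕ) = desStat O.lt x.1 from
        Dcnt_eq_des x.1 (le_refl _)]
  · -- sum statement
    have hsum : sumf f = ∑ i : Fin n, (x.2.1 i + Dcnt O.lt x.1 (i : ℕ)) := by
      unfold sumf
      rw [← Equiv.sum_comp x.1.perm f.val]
      exact Finset.sum_congr rfl fun i _ => heval i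
    have hDsum : ∑ i : Fin n, Dcnt O.lt x.1 (i : ℕ) = ∑ j ∈ DesSet O.lt x.1, (n - j) := by
      unfold Dcnt
      rw [Finset.sum_congr rfl (fun (i : Fin n) _ => Finset.card_filter _ _),
        Finset.sum_comm]
      apply Finset.sum_congr rfl
      intro j hj
      have hjn : j < n := (mem_DesSet.1 hj).1
      rw [Fin.sum_univ_eq_sum_range (fun m => if j ≤ m then 1 else 0) n, ← Finset.card_filter]
      have he : (Finset.range n).filter (fun m => j ≤ m) = Finset.Ico j n := by
        ext m
        simp only [Finset.mem_filter, Finset.mem_range, Finset.mem_Ico]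
        omega
      rw [he, Nat.card_Ico]
    have hDsumZ : (∑ i : Fin n, (Dcnt O.lt x.1 (i : ℕ) : ℤ))
        = (n : ℤ) * desStat O.lt x.1 - majStat O.lt x.1 := by
      rw [← Nat.cast_sum, hDsum, Nat.cast_sum]
      rw [Finset.sum_congr rfl
        (fun j hj => Nat.cast_sub (le_of_lt (mem_DesSet.1 hj).1))]
      rw [Finset.sum_sub_distrib, Finset.sum_const, nsmul_eq_mul]
      unfold desStat majStat
      rw [Nat.cast_sum]
      ring
    calc (sumf f : ℤ)
        = ∑ i : Fin n, ((x.2.1 i : ℤ) + (Dcnt O.lt x.1 (i : ℕ) : ℤ)) := by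
          rw [hsum]; push_cast; rfl
      _ = (∑ i : Fin n, (x.2.1 i : ℤ)) + ∑ i : Fin n, (Dcnt O.lt x.1 (i : ℕ) : ℤ) :=
          Finset.sum_add_distrib
      _ = (∑ i : Fin n, (x.2.1 i : ℤ)) + ((n : ℤ) * desStat O.lt x.1 - majStat O.lt x.1) := by
          rw [hDsumZ]
      _ = _ := by ring
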